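/- The group PSL(3, 𝔽_5) contains a metacyclic subgroup isomorphic to a semidirect product ℤ/31 ⋊ ℤ/3 with faithful action: there exist an injective group homomorphism φ from ℤ/3 into the automorphism group of ℤ/31, and an injective group homomorphism from the semidirect product (ℤ/31) ⋊_φ (ℤ/3) into PSL(3, 𝔽_5). -/

import Mathlib

set_option maxRecDepth 10000

/-- The projective special linear group `PSL(n, F)`: the quotient of `SL(n, F)` by its center. -/
abbrev PSL (n : ℕ) (F : Type) [Field F] :=
  Matrix.SpecialLinearGroup (Fin n) F ⧸ Subgroup.center (Matrix.SpecialLinearGroup (Fin n) F)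

instance : Fact (Nat.Prime 5) := ⟨by norm_num⟩

namespace MetacyclicAux

open Multiplicative

section homOfPow

variable {G : Type*} [Group G] {n : ℕ} [NeZero n]

/-- The homomorphism `Multiplicative (ZMod n) →* G` sending the generator to `a`,
given that `a ^ n = 1`. -/
def homOfPow (a : G) (h : a ^ n = 1) : Multiplicative (ZMod n) →* G where
  toFun x := a ^ (toAdd x).val
  map_one' := by simp
  map_mul' x y := by
    show a ^ (toAdd x + toAdd y).val = a ^ (toAdd x).val * a ^ (toAdd y).val
    rw [ZMod.val_add, ← pow_add]
    conv_rhs => rw [← Nat.div_add_mod ((toAdd x).val + (toAdd y).val) n]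
    rw [pow_add, pow_mul, h, one_pow, one_mul]

lemma homOfPow_apply (a : G) (h : a ^ n = 1) (x : Multiplicative (ZMod n)) :
    homOfPow a h x = a ^ (toAdd x).val := rfl

lemma homOfPow_natCast (a : G) (h : a ^ n = 1) (k : ℕ) :
    homOfPow a h (ofAdd ((k : ZMod n))) = a ^ k := by
  show a ^ (ZMod.val ((k : ZMod n))) = a ^ k
  rw [ZMod.val_natCast]
  conv_rhs => rw [← Nat.div_add_mod k n]
  rw [pow_add, pow_mul, h, one_pow, one_mul]

lemma hom_ext_zmod {f g : Multiplicative (ZMod n) →* G}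
    (h : f (ofAdd (1 : ZMod n)) = g (ofAdd (1 : ZMod n))) : f = g := by
  refine MonoidHom.ext fun x => ?_
  have hx : x = (ofAdd (1 : ZMod n)) ^ (toAdd x).val := by
    have h1 : ((toAdd x).val) • (1 : ZMod n) = toAdd x := by
      rw [nsmul_eq_mul, mul_one, ZMod.natCast_val, ZMod.cast_id]
    rw [← ofAdd_nsmul, h1, ofAdd_toAdd]
  rw [hx, map_pow, map_pow, h]

end homOfPow

/-- Multiplication by 5 as an additive automorphism of `ZMod 31`. -/
def σadd : ZMod 31 ≃+ ZMod 31 where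
  toFun x := 5 * x
  invFun x := 25 * x
  left_inv x := by
    show (25 : ZMod 31) * ((5 : ZMod 31) * x) = x
    rw [← mul_assoc, show (25 : ZMod 31) * 5 = 1 by decide, one_mul]
  right_inv x := by
    show (5 : ZMod 31) * ((25 : ZMod 31) * x) = x
    rw [← mul_assoc, show (5 : ZMod 31) * 25 = 1 by decide, one_mul]
  map_add' x y := mul_add 5 x y

/-- The order-3 automorphism of `Multiplicative (ZMod 31)`. -/
def σ : MulAut (Multiplicative (ZMod 31)) := AddEquiv.toMultiplicative σadd

lemma σ_apply (x : Multiplicative (ZMod 31)) : σ x = ofAdd (5 * toAdd x) := rfl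

lemma σ_pow_apply (k : ℕ) (x : Multiplicative (ZMod 31)) :
    (σ ^ k) x = ofAdd ((5 : ZMod 31) ^ k * toAdd x) := by
  induction k with
  | zero => simp
  | succ k ih =>
      rw [pow_succ', MulAut.mul_apply, ih, σ_apply, toAdd_ofAdd]
      congr 1
      ring

lemma σ_pow_three : σ ^ 3 = 1 := by
  ext x
  rw [σ_pow_apply, show ((5 : ZMod 31) ^ 3) = 1 by decide, one_mul]
  rfl

/-- The action `φ : Multiplicative (ZMod 3) →* MulAut (Multiplicative (ZMod 31))`. -/
def φ : Multiplicative (ZMod 3) →* MulAut (Multiplicative (ZMod 31)) :=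
  homOfPow σ σ_pow_three

abbrev SL5 := Matrix.SpecialLinearGroup (Fin 3) (ZMod 5)

instance : DecidableEq SL5 :=
  inferInstanceAs (DecidableEq {M : Matrix (Fin 3) (Fin 3) (ZMod 5) // M.det = 1})

/-- A matrix of order 31 in `SL(3, 𝔽₅)` (companion matrix of `x³ - 4x - 1`,
which is multiplication by a 31st root of unity of `𝔽₁₂₅`). -/
def A : SL5 := ⟨!![0,0,1;1,0,4;0,1,0], by decide⟩

/-- The Frobenius of `𝔽₁₂₅/𝔽₅` in the basis `1, α, α²`; it has order 3 and
conjugates `A` to `A ^ 5`. -/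
def B : SL5 := ⟨!![1,4,3;0,1,2;0,1,3], by decide⟩

lemma hA31 : A ^ 31 = 1 := by decide
lemma hB3 : B ^ 3 = 1 := by decide
lemma hBA : A ^ 5 * B = B * A := by decide
lemma hB2A : A ^ 25 * B ^ 2 = B ^ 2 * A := by decide
lemma hAne : A ≠ 1 := by decide
lemma hBne : B ≠ 1 := by decide

/-- The map sending the generator of `ZMod 31` to `A`. -/
def f : Multiplicative (ZMod 31) →* SL5 := homOfPow A hA31

/-- The map sending the generator of `ZMod 3` to `B`. -/
def g : Multiplicative (ZMod 3) →* SL5 := homOfPow B hB3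

lemma f_one : f (ofAdd (1 : ZMod 31)) = A := by
  have := homOfPow_natCast A hA31 1
  simpa [f] using this

lemma compat : ∀ y : Multiplicative (ZMod 3),
    f.comp (φ y).toMonoidHom = (MulAut.conj (g y)).toMonoidHom.comp f := by
  intro y
  obtain ⟨k, hk, rfl⟩ : ∃ k : ℕ, k < 3 ∧ y = ofAdd ((k : ZMod 3)) := by
    refine ⟨(toAdd y).val, ZMod.val_lt _, ?_⟩
    rw [ZMod.natCast_val, ZMod.cast_id, ofAdd_toAdd]
  apply hom_ext_zmod
  simp only [MonoidHom.comp_apply, MulEquiv.coe_toMonoidHom, MulAut.conj_apply]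
  rw [show φ (ofAdd ((k : ZMod 3))) = σ ^ k from homOfPow_natCast σ σ_pow_three k]
  rw [show g (ofAdd ((k : ZMod 3))) = B ^ k from homOfPow_natCast B hB3 k]
  rw [σ_pow_apply, f_one]
  rw [show toAdd (ofAdd (1 : ZMod 31)) = 1 from rfl, mul_one]
  rw [show ((5 : ZMod 31) ^ k) = ((5 ^ k : ℕ) : ZMod 31) by push_cast; ring]
  rw [show f (ofAdd (((5 ^ k : ℕ) : ZMod 31))) = A ^ (5 ^ k) from homOfPow_natCast A hA31 _]
  interval_cases k
  · simp
  · rw [pow_one, pow_one, eq_mul_inv_iff_mul_eq]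
    exact hBA
  · rw [eq_mul_inv_iff_mul_eq, show (5 : ℕ) ^ 2 = 25 by norm_num]
    exact hB2A

/-- The lifted homomorphism into `SL(3, 𝔽₅)`. -/
def ψ' : (Multiplicative (ZMod 31)) ⋊[φ] (Multiplicative (ZMod 3)) →* SL5 :=
  SemidirectProduct.lift f g compat

lemma ψ'_injective : Function.Injective ψ' := by
  rw [injective_iff_map_eq_one]
  intro x hx
  have hx2 : A ^ (toAdd x.left).val * B ^ (toAdd x.right).val = 1 := by
    rw [← SemidirectProduct.inl_left_mul_inr_right x, map_mul] at hx
    simp only [ψ', SemidirectProduct.lift_inl, SemidirectProduct.lift_inr] at hx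
    exact hx
  set m := (toAdd x.left).val with hm
  set v := (toAdd x.right).val with hv
  have hu : A ^ m = (B ^ v)⁻¹ := eq_inv_of_mul_eq_one_left hx2
  have hw3 : (B ^ v) ^ 3 = 1 := by
    rw [← pow_mul, mul_comm, pow_mul, hB3, one_pow]
  have hw31 : (B ^ v) ^ 31 = 1 := by
    have h : (A ^ m) ^ 31 = 1 := by rw [← pow_mul, mul_comm, pow_mul, hA31, one_pow]
    rw [hu, inv_pow, inv_eq_one] at h
    exact h
  have hw : B ^ v = 1 := by
    have h : B ^ v = ((B ^ v) ^ 3)⁻¹ ^ 10 * (B ^ v) ^ 31 := by group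
    rw [hw3, hw31, inv_one, one_pow, one_mul] at h
    exact h
  have hAm : A ^ m = 1 := by rw [hu, hw, inv_one]
  haveI : Fact (Nat.Prime 31) := ⟨by norm_num⟩
  haveI : Fact (Nat.Prime 3) := ⟨by norm_num⟩
  have hordA : orderOf A = 31 := orderOf_eq_prime hA31 hAne
  have hordB : orderOf B = 3 := orderOf_eq_prime hB3 hBne
  have hm0 : m = 0 := by
    have hd : 31 ∣ m := hordA ▸ orderOf_dvd_of_pow_eq_one hAm
    exact Nat.eq_zero_of_dvd_of_lt hd (hm ▸ ZMod.val_lt (toAdd x.left))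
  have hv0 : v = 0 := by
    have hd : 3 ∣ v := hordB ▸ orderOf_dvd_of_pow_eq_one hw
    exact Nat.eq_zero_of_dvd_of_lt hd (hv ▸ ZMod.val_lt (toAdd x.right))
  have hleft : x.left = 1 := by
    have : toAdd x.left = 0 := (ZMod.val_eq_zero _).mp hm0
    exact toAdd_eq_zero.mp this
  have hright : x.right = 1 := by
    have : toAdd x.right = 0 := (ZMod.val_eq_zero _).mp hv0
    exact toAdd_eq_zero.mp this
  rw [← SemidirectProduct.inl_left_mul_inr_right x, hleft, hright, map_one, map_one, mul_one]

lemma φ_injective : Function.Injective φ := by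
  rw [injective_iff_map_eq_one]
  intro a ha
  have h5 : (5 : ZMod 31) ^ (toAdd a).val = 1 := by
    have h := congrArg (fun e : MulAut (Multiplicative (ZMod 31)) => e (ofAdd (1 : ZMod 31))) ha
    rw [show φ a = σ ^ (toAdd a).val from rfl, σ_pow_apply] at h
    have h' : (5 : ZMod 31) ^ (toAdd a).val * toAdd (ofAdd (1 : ZMod 31)) = 1 := by
      have := congrArg toAdd h
      simpa using this
    simpa using h'
  have hlt : (toAdd a).val < 3 := ZMod.val_lt _
  have h0 : (toAdd a).val = 0 := by
    interval_cases h : (toAdd a).val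
    · rfl
    · exact absurd h5 (by decide)
    · exact absurd h5 (by decide)
  have : toAdd a = 0 := (ZMod.val_eq_zero _).mp h0
  exact toAdd_eq_zero.mp this

lemma center_eq_bot : Subgroup.center SL5 = ⊥ := by
  rw [Subgroup.eq_bot_iff_forall]
  intro x hx
  obtain ⟨r, hr3, hrx⟩ := Matrix.SpecialLinearGroup.mem_center_iff.mp hx
  have hr : r = 1 := by
    have h3 : r ^ 3 = 1 := by simpa using hr3
    have : ∀ s : ZMod 5, s ^ 3 = 1 → s = 1 := by decide
    exact this r h3
  apply Subtype.ext
  rw [← hrx, hr]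
  simp

end MetacyclicAux

open MetacyclicAux in
/-- The group `PSL(3, 𝔽_5)` contains a metacyclic subgroup isomorphic to a semidirect product
`ℤ/31 ⋊ ℤ/3` with faithful action. -/
theorem psl_three_five_contains_metacyclic :
    ∃ (φ : Multiplicative (ZMod 3) →* MulAut (Multiplicative (ZMod 31)))
      (ψ : (Multiplicative (ZMod 31)) ⋊[φ] (Multiplicative (ZMod 3)) →* PSL 3 (ZMod 5)),
      Function.Injective φ ∧ Function.Injective ψ := by
  refine ⟨MetacyclicAux.φ,
    (QuotientGroup.mk' (Subgroup.center SL5)).comp ψ', φ_injective, ?_⟩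
  have hmk : Function.Injective (QuotientGroup.mk' (Subgroup.center SL5)) := by
    rw [← MonoidHom.ker_eq_bot_iff, QuotientGroup.ker_mk']
    exact center_eq_bot
  exact hmk.comp ψ'_injective
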